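/- Fix a_0 < a_1 < ⋯ < a_k. For every x in the open positive cone of ℝ^{k+1} (all x_j > 0) there exist unique ellipsoidal coordinates (t_0, t_1, …, t_k) with a_k < t_0 and a_{i−1} < t_i < a_i for i = 1,…,k, such that Σ_{j=0}^{k} x_j²/(t_i − a_j) = 1 for every i = 0,…,k; moreover this assignment is a bijection between the positive cone and the open box (a_k, ∞) × ∏_{i=1}^{k} (a_{i−1}, a_i). -/

import Mathlib

open Filter Set Topology Polynomial Finset

noncomputable section


lemma div_lt_div_same_sign {c p q : ℝ} (hc : 0 < c) (hpq : 0 < p * q) (h : p < q) :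
    c / q < c / p := by
  rcases lt_or_ge 0 p with hp | hp
  · exact div_lt_div_of_pos_left hc hp h
  · have hp' : p < 0 := lt_of_le_of_ne hp (by rintro rfl; simp at hpq)
    have hq' : q < 0 := by by_contra h'; push_neg at h'; nlinarith
    have := div_lt_div_of_pos_left hc (by linarith : (0:ℝ) < -q) (by linarith : -q < -p)
    rw [div_neg, div_neg] at this
    linarith

lemma sum_strictAntiOn {n : ℕ} (x a : Fin (n+1) → ℝ) (hx : ∀ j, 0 < x j) (S : Set ℝ)
    (hsign : ∀ s ∈ S, ∀ t ∈ S, ∀ j, 0 < (s - a j) * (t - a j)) :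
    StrictAntiOn (fun t => ∑ j, (x j)^2 / (t - a j)) S := by
  intro s hs t ht hst
  apply Finset.sum_lt_sum_of_nonempty Finset.univ_nonempty
  intro j _
  exact div_lt_div_same_sign (by have := hx j; positivity) (hsign s hs t ht j) (by linarith)

lemma sum_continuousOn {n : ℕ} (x a : Fin (n+1) → ℝ) (S : Set ℝ)
    (hne : ∀ s ∈ S, ∀ j, s - a j ≠ 0) :
    ContinuousOn (fun t => ∑ j, (x j)^2 / (t - a j)) S :=
  continuousOn_finset_sum _ fun j _ =>
    continuousOn_const.div (by fun_prop) (fun s hs => hne s hs j)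

lemma existsUnique_root {f : ℝ → ℝ} {S : Set ℝ} (hS : S.OrdConnected)
    (hcont : ContinuousOn f S) (hanti : StrictAntiOn f S) {b c : ℝ} (hb : b ∈ S) (hc : c ∈ S)
    (hfb : 1 < f b) (hfc : f c < 1) : ∃! t, t ∈ S ∧ f t = 1 := by
  have hbc : b < c := by
    rcases lt_trichotomy b c with h | h | h
    · exact h
    · subst h; linarith
    · have := hanti hc hb h; linarith
  have hsub : Icc b c ⊆ S := hS.out hb hc
  have h1 : (1:ℝ) ∈ Icc (f c) (f b) := ⟨le_of_lt hfc, le_of_lt hfb⟩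
  obtain ⟨t, htmem, htval⟩ := intermediate_value_Icc' (le_of_lt hbc) (hcont.mono hsub) h1
  exact ⟨t, ⟨hsub htmem, htval⟩, fun t' ⟨ht'S, ht'val⟩ =>
    hanti.injOn ht'S (hsub htmem) (by rw [ht'val, htval])⟩

lemma tendsto_sub_nhdsWithin_Ioi (α : ℝ) :
    Tendsto (fun t => t - α) (𝓝[>] α) (𝓝[>] 0) := by
  apply tendsto_nhdsWithin_of_tendsto_nhds_of_eventually_within
  · have : Tendsto (fun t : ℝ => t - α) (𝓝 α) (𝓝 (α - α)) := (continuous_sub_right α).tendsto α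
    simpa using this.mono_left nhdsWithin_le_nhds
  · filter_upwards [self_mem_nhdsWithin] with t ht
    simp only [Set.mem_Ioi] at ht ⊢
    linarith

/-- the sum tends to +∞ as t → a j₀ from the right -/
lemma tendsto_sum_atTop {n : ℕ} (x a : Fin (n+1) → ℝ) (hx : ∀ j, 0 < x j) (j₀ : Fin (n+1))
    (hja : ∀ j, j ≠ j₀ → a j ≠ a j₀) :
    Tendsto (fun t => ∑ j, (x j)^2 / (t - a j)) (𝓝[>] (a j₀)) atTop := by
  have hmain : Tendsto (fun t => (x j₀)^2 / (t - a j₀)) (𝓝[>] (a j₀)) atTop := by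
    simp_rw [div_eq_mul_inv]
    exact (tendsto_inv_nhdsGT_zero.comp (tendsto_sub_nhdsWithin_Ioi (a j₀))).const_mul_atTop
      (by have := hx j₀; positivity)
  have hrest : Tendsto (fun t => ∑ j ∈ univ.erase j₀, (x j)^2 / (t - a j)) (𝓝[>] (a j₀))
      (𝓝 (∑ j ∈ univ.erase j₀, (x j)^2 / (a j₀ - a j))) := by
    apply Tendsto.mono_left _ nhdsWithin_le_nhds
    apply tendsto_finset_sum
    intro j hj
    apply Tendsto.div tendsto_const_nhds ((continuous_sub_right (a j)).tendsto (a j₀))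
    exact sub_ne_zero_of_ne (Ne.symm (hja j (Finset.mem_erase.1 hj).1))
  have key : ∀ t : ℝ, ∑ j, (x j)^2 / (t - a j) =
      (x j₀)^2 / (t - a j₀) + ∑ j ∈ univ.erase j₀, (x j)^2 / (t - a j) := by
    intro t
    rw [← Finset.add_sum_erase _ _ (Finset.mem_univ j₀)]
  simp_rw [key]
  apply tendsto_atTop_add_right_of_le' _ (∑ j ∈ univ.erase j₀, (x j)^2 / (a j₀ - a j) - 1) hmain
  have := hrest.eventually (eventually_gt_nhds (by linarith :
    (∑ j ∈ univ.erase j₀, (x j)^2 / (a j₀ - a j)) - 1 < ∑ j ∈ univ.erase j₀, (x j)^2 / (a j₀ - a j)))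
  filter_upwards [this] with t ht
  exact le_of_lt ht

/-- the sum tends to -∞ as t → a j₀ from the left -/
lemma tendsto_sum_atBot {n : ℕ} (x a : Fin (n+1) → ℝ) (hx : ∀ j, 0 < x j) (j₀ : Fin (n+1))
    (hja : ∀ j, j ≠ j₀ → a j ≠ a j₀) :
    Tendsto (fun t => ∑ j, (x j)^2 / (t - a j)) (𝓝[<] (a j₀)) atBot := by
  have hneg := tendsto_sum_atTop x (fun j => - a j) hx j₀ (by intro j hj; simpa using hja j hj)
  have hmap : Tendsto (fun t : ℝ => -t) (𝓝[<] (a j₀)) (𝓝[>] (-(a j₀))) := by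
    apply tendsto_nhdsWithin_of_tendsto_nhds_of_eventually_within
    · exact (tendsto_neg _).mono_left nhdsWithin_le_nhds
    · filter_upwards [self_mem_nhdsWithin] with t ht
      simp only [Set.mem_Iio] at ht; simp only [Set.mem_Ioi]; linarith
  have h2 := (hneg.comp hmap)
  have h3 : Tendsto (fun t => -∑ j, (x j)^2 / (t - a j)) (𝓝[<] (a j₀)) atTop := by
    apply h2.congr
    intro t
    simp only [Function.comp]
    rw [← Finset.sum_neg_distrib]
    congr 1; ext j; rw [div_eq_mul_inv, div_eq_mul_inv, show -t - -a j = -(t - a j) by ring, inv_neg]; ring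
  simpa using tendsto_neg_atBot_iff.mpr h3

lemma root_Ioi {n : ℕ} (a : Fin (n+1) → ℝ) (ha : StrictMono a) (x : Fin (n+1) → ℝ)
    (hx : ∀ j, 0 < x j) :
    ∃! s, s ∈ Ioi (a (Fin.last n)) ∧ ∑ j, (x j)^2 / (s - a j) = 1 := by
  have hsign : ∀ s ∈ Ioi (a (Fin.last n)), ∀ j, 0 < s - a j := fun s hs j =>
    sub_pos.2 (lt_of_le_of_lt (ha.monotone (Fin.le_last j)) hs)
  have hTop := tendsto_sum_atTop x a hx (Fin.last n)
    (fun j hj => ha.injective.ne hj)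
  obtain ⟨b, hb1, hb2⟩ := ((hTop.eventually_gt_atTop 1).and
    (Filter.eventually_mem_set.mpr self_mem_nhdsWithin)).exists
  have hZero : Tendsto (fun t => ∑ j, (x j)^2 / (t - a j)) atTop (𝓝 (0:ℝ)) := by
    have h2 : Tendsto (fun t : ℝ => ∑ j : Fin (n+1), (x j)^2 / (t - a j)) atTop
        (𝓝 (∑ j : Fin (n+1), (0:ℝ))) := by
      apply tendsto_finset_sum
      intro j _
      exact tendsto_const_nhds.div_atTop (tendsto_atTop_add_const_right _ _ tendsto_id)
    simpa using h2
  obtain ⟨c, hc1, hc2⟩ := ((hZero.eventually_lt_const one_pos).and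
    (eventually_gt_atTop (a (Fin.last n)))).exists
  exact existsUnique_root Set.ordConnected_Ioi
    (sum_continuousOn x a _ (fun s hs j => ne_of_gt (hsign s hs j)))
    (sum_strictAntiOn x a hx _ (fun s hs t ht j => mul_pos (hsign s hs j) (hsign t ht j)))
    hb2 hc2 hb1 hc1

lemma root_Ioo {n : ℕ} (a : Fin (n+1) → ℝ) (ha : StrictMono a) (x : Fin (n+1) → ℝ)
    (hx : ∀ j, 0 < x j) (i : Fin n) :
    ∃! s, s ∈ Ioo (a i.castSucc) (a i.succ) ∧ ∑ j, (x j)^2 / (s - a j) = 1 := by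
  have hab : a i.castSucc < a i.succ := ha (Fin.castSucc_lt_succ (i := i))
  have hsign : ∀ s ∈ Ioo (a i.castSucc) (a i.succ), ∀ t ∈ Ioo (a i.castSucc) (a i.succ),
      ∀ j, 0 < (s - a j) * (t - a j) := by
    intro s hs t ht j
    rcases le_or_gt j i.castSucc with h | h
    · have h1 : a j ≤ a i.castSucc := ha.monotone h
      have := hs.1; have := ht.1
      apply mul_pos <;> (rw [sub_pos]; linarith)
    · have h2 : a i.succ ≤ a j := ha.monotone (Fin.castSucc_lt_iff_succ_le.mp h)
      have := hs.2; have := ht.2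
      apply mul_pos_of_neg_of_neg <;> (rw [sub_neg]; linarith)
  have hTop := tendsto_sum_atTop x a hx i.castSucc (fun j hj => ha.injective.ne hj)
  obtain ⟨b, hb1, hb2⟩ := ((hTop.eventually_gt_atTop 1).and
    (Filter.eventually_mem_set.mpr (Ioo_mem_nhdsGT hab))).exists
  have hBot := tendsto_sum_atBot x a hx i.succ (fun j hj => ha.injective.ne hj)
  obtain ⟨c, hc1, hc2⟩ := ((hBot.eventually_lt_atBot 1).and
    (Filter.eventually_mem_set.mpr (Ioo_mem_nhdsLT hab))).exists
  exact existsUnique_root Set.ordConnected_Ioo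
    (sum_continuousOn x a _ (fun s hs j => by
      have := hsign s hs s hs j
      intro h; rw [h] at this; simp at this))
    (sum_strictAntiOn x a hx _ hsign)
    hb2 hc2 hb1 hc1

theorem part1 (k : ℕ) (a : Fin (k+1) → ℝ) (ha : StrictMono a) :
    ∀ x : Fin (k+1) → ℝ, (∀ j, 0 < x j) →
      ∃! t : Fin (k+1) → ℝ,
        (a (Fin.last k) < t 0 ∧
          ∀ i : Fin k, a i.castSucc < t i.succ ∧ t i.succ < a i.succ) ∧
        (∀ i, ∑ j, (x j)^2 / (t i - a j) = 1) := by
  intro x hx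
  obtain h0 := root_Ioi a ha x hx
  have hi := fun i : Fin k => root_Ioo a ha x hx i
  refine ⟨Fin.cases h0.choose (fun i => (hi i).choose), ⟨⟨?_, ?_⟩, ?_⟩, ?_⟩
  · simpa using h0.choose_spec.1.1
  · intro i
    simpa using (hi i).choose_spec.1.1
  · intro i
    induction i using Fin.cases with
    | zero => simpa using h0.choose_spec.1.2
    | succ i => simpa using (hi i).choose_spec.1.2
  · intro t' ⟨⟨h1, h2⟩, h3⟩
    funext i
    induction i using Fin.cases with
    | zero => simpa using h0.choose_spec.2 (t' 0) ⟨h1, h3 0⟩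
    | succ i => simpa using (hi i).choose_spec.2 (t' i.succ) ⟨h2 i, h3 i.succ⟩


lemma prod_erase_eq_succAbove {M : Type*} [CommMonoid M] {n : ℕ} (f : Fin (n+1) → M)
    (j : Fin (n+1)) :
    ∏ m ∈ Finset.univ.erase j, f m = ∏ i : Fin n, f (j.succAbove i) := by
  rw [Fin.univ_succAbove, Finset.erase_cons, Finset.prod_map]
  rfl

lemma deg_sum_lt {n : ℕ} (a d : Fin (n+1) → ℝ) :
    (∑ j, Polynomial.C (d j) * ∏ m ∈ Finset.univ.erase j, (X - Polynomial.C (a m))).degree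
      < ((n+1 : ℕ) : WithBot ℕ) := by
  apply lt_of_le_of_lt (Polynomial.degree_sum_le _ _)
  rw [Finset.sup_lt_iff (by exact_mod_cast WithBot.bot_lt_coe (n+1))]
  intro j _
  apply lt_of_le_of_lt (Polynomial.degree_mul_le _ _)
  have h1 : (∏ m ∈ Finset.univ.erase j, (X - Polynomial.C (a m))).degree
      = ((n : ℕ) : WithBot ℕ) := by
    rw [Polynomial.degree_prod]
    simp only [Polynomial.degree_X_sub_C, Finset.sum_const, Finset.card_erase_of_mem
      (Finset.mem_univ j), Finset.card_univ, Fintype.card_fin, Nat.add_sub_cancel]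
    rw [nsmul_eq_mul, mul_one]
  calc (Polynomial.C (d j)).degree + (∏ m ∈ Finset.univ.erase j, (X - Polynomial.C (a m))).degree
      ≤ 0 + ((n : ℕ) : WithBot ℕ) := add_le_add Polynomial.degree_C_le (le_of_eq h1)
    _ = ((n : ℕ) : WithBot ℕ) := by rw [zero_add]
    _ < ((n+1 : ℕ) : WithBot ℕ) := by exact_mod_cast Nat.lt_succ_self n

lemma eval_sum_prod {n : ℕ} (a d : Fin (n+1) → ℝ) (s : ℝ) (hne : ∀ j, s - a j ≠ 0) :
    (∑ j, Polynomial.C (d j) * ∏ m ∈ Finset.univ.erase j, (X - Polynomial.C (a m))).eval s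
      = (∏ m, (s - a m)) * ∑ j, d j / (s - a j) := by
  rw [Polynomial.eval_finset_sum, Finset.mul_sum]
  apply Finset.sum_congr rfl
  intro j _
  rw [Polynomial.eval_mul, Polynomial.eval_C, Polynomial.eval_prod]
  simp only [Polynomial.eval_sub, Polynomial.eval_X, Polynomial.eval_C]
  rw [← Finset.mul_prod_erase _ (fun m => s - a m) (Finset.mem_univ j)]
  rw [mul_div_assoc', eq_comm, div_eq_iff (hne j)]
  ring

lemma dzero {n : ℕ} {a t d : Fin (n+1) → ℝ} (hainj : Function.Injective a)
    (htinj : Function.Injective t) (hta : ∀ i j, t i ≠ a j)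
    (h : ∀ i, ∑ j, d j / (t i - a j) = 0) : ∀ j, d j = 0 := by
  set P : Polynomial ℝ :=
    ∑ j, Polynomial.C (d j) * ∏ m ∈ Finset.univ.erase j, (X - Polynomial.C (a m)) with hP
  have hdeg : P.degree < ((Finset.univ : Finset (Fin (n+1))).card : WithBot ℕ) := by
    rw [Finset.card_univ, Fintype.card_fin]
    exact deg_sum_lt a d
  have heval : ∀ i, P.eval (t i) = 0 := by
    intro i
    rw [hP, eval_sum_prod a d (t i) (fun j => sub_ne_zero_of_ne (hta i j)), h i, mul_zero]
  have hP0 : P = 0 := Polynomial.eq_zero_of_degree_lt_of_eval_index_eq_zero Finset.univ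
    (htinj.injOn) hdeg (fun i _ => heval i)
  intro j
  have hev := congrArg (Polynomial.eval (a j)) hP0
  rw [hP] at hev
  rw [Polynomial.eval_finset_sum] at hev
  rw [Finset.sum_eq_single j (fun j' _ hj' => by
    rw [Polynomial.eval_mul, Polynomial.eval_prod]
    apply mul_eq_zero_of_right
    apply Finset.prod_eq_zero (Finset.mem_erase.mpr ⟨Ne.symm hj', Finset.mem_univ j⟩)
    simp) (by simp)] at hev
  rw [Polynomial.eval_mul, Polynomial.eval_C, Polynomial.eval_prod] at hev
  simp only [Polynomial.eval_sub, Polynomial.eval_X, Polynomial.eval_C,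
    Polynomial.eval_zero] at hev
  rcases mul_eq_zero.mp hev with h' | h'
  · exact h'
  · exfalso
    rw [Finset.prod_eq_zero_iff] at h'
    obtain ⟨m, hm, hm0⟩ := h'
    exact hainj.ne (Ne.symm (Finset.mem_erase.mp hm).1) (by linarith [sub_eq_zero.mp hm0])

lemma sum_y_eq_one {n : ℕ} (a t y : Fin (n+1) → ℝ) (hainj : Function.Injective a)
    (htinj : Function.Injective t) (hta : ∀ i j, t i ≠ a j)
    (hy : ∀ j, y j * ∏ m ∈ Finset.univ.erase j, (a j - a m) = -(∏ i', (a j - t i'))) :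
    ∀ i, ∑ j, y j / (t i - a j) = 1 := by
  set Q : Polynomial ℝ :=
    ∑ j, Polynomial.C (y j) * ∏ m ∈ Finset.univ.erase j, (X - Polynomial.C (a m)) with hQ
  set Pa : Polynomial ℝ := ∏ m, (X - Polynomial.C (a m)) with hPa
  set Pt : Polynomial ℝ := ∏ i', (X - Polynomial.C (t i')) with hPt
  have hPaM : Pa.Monic := monic_prod_of_monic _ _ (fun m _ => monic_X_sub_C (a m))
  have hPtM : Pt.Monic := monic_prod_of_monic _ _ (fun i _ => monic_X_sub_C (t i))
  have hPadeg : Pa.degree = ((n+1 : ℕ) : WithBot ℕ) := by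
    rw [hPa, Polynomial.degree_prod]
    simp [Polynomial.degree_X_sub_C]
  have hPtdeg : Pt.degree = ((n+1 : ℕ) : WithBot ℕ) := by
    rw [hPt, Polynomial.degree_prod]
    simp [Polynomial.degree_X_sub_C]
  set R : Polynomial ℝ := Pa - Pt - Q with hR
  have hdegsub : (Pa - Pt).degree < ((n+1 : ℕ) : WithBot ℕ) := by
    rcases eq_or_ne Pa Pt with h | h
    · rw [h, sub_self, Polynomial.degree_zero]
      exact_mod_cast WithBot.bot_lt_coe (n+1)
    · have := Polynomial.degree_sub_lt (hPadeg.trans hPtdeg.symm) hPaM.ne_zero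
        (by rw [hPaM.leadingCoeff, hPtM.leadingCoeff])
      rwa [hPadeg] at this
  have hdegR : R.degree < ((n+1 : ℕ) : WithBot ℕ) := by
    apply lt_of_le_of_lt (Polynomial.degree_sub_le _ _)
    exact max_lt hdegsub (deg_sum_lt a y)
  have hevalR : ∀ j, R.eval (a j) = 0 := by
    intro j
    have h1 : Pa.eval (a j) = 0 := by
      rw [hPa, Polynomial.eval_prod]
      apply Finset.prod_eq_zero (Finset.mem_univ j)
      simp
    have h2 : Pt.eval (a j) = ∏ i', (a j - t i') := by
      rw [hPt, Polynomial.eval_prod]; simp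
    have h3 : Q.eval (a j) = y j * ∏ m ∈ Finset.univ.erase j, (a j - a m) := by
      rw [hQ, Polynomial.eval_finset_sum]
      rw [Finset.sum_eq_single j (fun j' _ hj' => by
        rw [Polynomial.eval_mul, Polynomial.eval_prod]
        apply mul_eq_zero_of_right
        apply Finset.prod_eq_zero (Finset.mem_erase.mpr ⟨Ne.symm hj', Finset.mem_univ j⟩)
        simp) (by simp)]
      rw [Polynomial.eval_mul, Polynomial.eval_C, Polynomial.eval_prod]
      simp
    rw [hR, Polynomial.eval_sub, Polynomial.eval_sub, h1, h2, h3, hy j]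
    ring
  have hR0 : R = 0 := by
    apply Polynomial.eq_zero_of_degree_lt_of_eval_index_eq_zero Finset.univ (hainj.injOn)
      (by rw [Finset.card_univ, Fintype.card_fin]; exact hdegR) (fun j _ => hevalR j)
  intro i
  have hne : ∀ j, t i - a j ≠ 0 := fun j => sub_ne_zero_of_ne (hta i j)
  have hev := congrArg (Polynomial.eval (t i)) hR0
  rw [hR, Polynomial.eval_sub, Polynomial.eval_sub, Polynomial.eval_zero] at hev
  have h1 : Pa.eval (t i) = ∏ m, (t i - a m) := by
    rw [hPa, Polynomial.eval_prod]; simp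
  have h2 : Pt.eval (t i) = 0 := by
    rw [hPt, Polynomial.eval_prod]
    apply Finset.prod_eq_zero (Finset.mem_univ i)
    simp
  have h3 : Q.eval (t i) = (∏ m, (t i - a m)) * ∑ j, y j / (t i - a j) :=
    eval_sum_prod a y (t i) hne
  rw [h1, h2, h3] at hev
  have hprod : (∏ m, (t i - a m)) ≠ 0 := Finset.prod_ne_zero_iff.mpr (fun m _ => hne m)
  have : (∏ m, (t i - a m)) * 1 = (∏ m, (t i - a m)) * ∑ j, y j / (t i - a j) := by
    rw [mul_one]; linarith
  exact (mul_left_cancel₀ hprod this).symm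

lemma box_props {k : ℕ} (a t : Fin (k+1) → ℝ) (ha : StrictMono a)
    (ht0 : a (Fin.last k) < t 0)
    (hti : ∀ i : Fin k, a i.castSucc < t i.succ ∧ t i.succ < a i.succ) :
    (∀ i j, t i ≠ a j) ∧ Function.Injective t := by
  have hta : ∀ i j, t i ≠ a j := by
    intro i j
    induction i using Fin.cases with
    | zero => exact ne_of_gt (lt_of_le_of_lt (ha.monotone (Fin.le_last j)) ht0)
    | succ i =>
      rcases le_or_gt j i.castSucc with h | h
      · exact ne_of_gt (lt_of_le_of_lt (ha.monotone h) (hti i).1)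
      · exact ne_of_lt (lt_of_lt_of_le (hti i).2
          (ha.monotone (Fin.castSucc_lt_iff_succ_le.mp h)))
  refine ⟨hta, ?_⟩
  have hlt : ∀ i : Fin k, t i.succ < t 0 := fun i =>
    lt_trans (lt_of_lt_of_le (hti i).2 (ha.monotone (Fin.le_last i.succ))) ht0
  have hmono : ∀ i i' : Fin k, i < i' → t i.succ < t i'.succ := by
    intro i i' h
    have h1 : i.succ ≤ i'.castSucc := Fin.succ_le_castSucc_iff.mpr h
    exact lt_trans (lt_of_lt_of_le (hti i).2 (ha.monotone h1)) (hti i').1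
  intro i i' he
  induction i using Fin.cases with
  | zero =>
    induction i' using Fin.cases with
    | zero => rfl
    | succ i' => exact absurd he (ne_of_gt (hlt i'))
  | succ i =>
    induction i' using Fin.cases with
    | zero => exact absurd he (ne_of_lt (hlt i))
    | succ i' =>
      rcases lt_trichotomy i i' with h | h | h
      · exact absurd he (ne_of_lt (hmono i i' h))
      · rw [h]
      · exact absurd he (ne_of_gt (hmono i' i h))

lemma y_pos {k : ℕ} (a t : Fin (k+1) → ℝ) (ha : StrictMono a)
    (ht0 : a (Fin.last k) < t 0)
    (hti : ∀ i : Fin k, a i.castSucc < t i.succ ∧ t i.succ < a i.succ) (j : Fin (k+1)) :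
    0 < -(∏ i, (a j - t i)) / ∏ m ∈ Finset.univ.erase j, (a j - a m) := by
  rw [prod_erase_eq_succAbove (fun m => a j - a m) j]
  rw [Fin.prod_univ_succ (fun i => a j - t i)]
  have h0 : a j - t 0 < 0 := sub_neg.mpr (lt_of_le_of_lt (ha.monotone (Fin.le_last j)) ht0)
  rw [show -((a j - t 0) * ∏ i : Fin k, (a j - t i.succ))
      = (t 0 - a j) * ∏ i : Fin k, (a j - t i.succ) by ring]
  rw [mul_div_assoc, ← Finset.prod_div_distrib]
  apply mul_pos (by linarith)
  apply Finset.prod_pos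
  intro i _
  rcases lt_or_ge i.castSucc j with h | h
  · rw [Fin.succAbove_of_castSucc_lt _ _ h]
    apply div_pos
    · have := ha.monotone (Fin.castSucc_lt_iff_succ_le.mp h)
      have := (hti i).2
      linarith
    · exact sub_pos.mpr (ha h)
  · rw [Fin.succAbove_of_le_castSucc _ _ h]
    apply div_pos_of_neg_of_neg
    · have := ha.monotone h
      have := (hti i).1
      linarith
    · exact sub_neg.mpr (ha (lt_of_le_of_lt h (Fin.castSucc_lt_succ (i := i))))

theorem part2 (k : ℕ) (a : Fin (k+1) → ℝ) (ha : StrictMono a) :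
    ∀ t : Fin (k+1) → ℝ,
      (a (Fin.last k) < t 0 ∧
        ∀ i : Fin k, a i.castSucc < t i.succ ∧ t i.succ < a i.succ) →
      ∃! x : Fin (k+1) → ℝ, (∀ j, 0 < x j) ∧
        (∀ i, ∑ j, (x j)^2 / (t i - a j) = 1) := by
  intro t ⟨ht0, hti⟩
  obtain ⟨hta, htinj⟩ := box_props a t ha ht0 hti
  set y : Fin (k+1) → ℝ :=
    fun j => -(∏ i, (a j - t i)) / ∏ m ∈ Finset.univ.erase j, (a j - a m) with hy
  have hypos : ∀ j, 0 < y j := fun j => y_pos a t ha ht0 hti j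
  have hden : ∀ j : Fin (k+1), (∏ m ∈ Finset.univ.erase j, (a j - a m)) ≠ 0 := by
    intro j
    rw [Finset.prod_ne_zero_iff]
    intro m hm
    exact sub_ne_zero_of_ne (ha.injective.ne (Ne.symm (Finset.mem_erase.mp hm).1))
  have hyid : ∀ j, y j * ∏ m ∈ Finset.univ.erase j, (a j - a m) = -(∏ i', (a j - t i')) := by
    intro j
    exact div_mul_cancel₀ _ (hden j)
  have hsum := sum_y_eq_one a t y ha.injective htinj hta hyid
  refine ⟨fun j => Real.sqrt (y j), ⟨fun j => Real.sqrt_pos.mpr (hypos j), ?_⟩, ?_⟩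
  · intro i
    have hs : ∀ j, Real.sqrt (y j) ^ 2 = y j := fun j => Real.sq_sqrt (hypos j).le
    simp_rw [hs]
    exact hsum i
  · intro x' ⟨hx'pos, hx'eq⟩
    have hd := dzero ha.injective htinj hta (d := fun j => (x' j)^2 - y j) (by
      intro i
      simp_rw [sub_div, Finset.sum_sub_distrib, hx'eq i, hsum i, sub_self])
    funext j
    have h1 : (x' j)^2 = y j := by
      have h2 : x' j ^ 2 - y j = 0 := hd j
      linarith
    rw [← h1, Real.sqrt_sq (hx'pos j).le]

/-- Ellipsoidal coordinates: fix `a₀ < a₁ < ⋯ < a_k`. Every `x` in the open positive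
cone of `ℝ^{k+1}` has unique ellipsoidal coordinates `t` with `a_k < t₀` and
`a_{i-1} < tᵢ < aᵢ` (i = 1,…,k) satisfying `Σⱼ xⱼ²/(tᵢ - aⱼ) = 1` for all `i`; moreover
this assignment is a bijection between the positive cone and the open box. -/
theorem stmt_3 (k : ℕ) (a : Fin (k+1) → ℝ) (ha : StrictMono a) :
    (∀ x : Fin (k+1) → ℝ, (∀ j, 0 < x j) →
      ∃! t : Fin (k+1) → ℝ,
        (a (Fin.last k) < t 0 ∧
          ∀ i : Fin k, a i.castSucc < t i.succ ∧ t i.succ < a i.succ) ∧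
        (∀ i, ∑ j, (x j)^2 / (t i - a j) = 1)) ∧
    (∀ t : Fin (k+1) → ℝ,
      (a (Fin.last k) < t 0 ∧
        ∀ i : Fin k, a i.castSucc < t i.succ ∧ t i.succ < a i.succ) →
      ∃! x : Fin (k+1) → ℝ, (∀ j, 0 < x j) ∧
        (∀ i, ∑ j, (x j)^2 / (t i - a j) = 1)) := by
  exact ⟨part1 k a ha, part2 k a ha⟩

end
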